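/- Fix ε ≥ 0 and p̄ = (p̄_x, p̄_y, p̄_z) ∈ ℝ³ with p̄_z ≠ 0. Define, for t ∈ ℝ: x(t) = (p̄_y/p̄_z)(cos(p̄_z t) − 1) + (p̄_x/p̄_z) sin(p̄_z t), y(t) = −(p̄_x/p̄_z)(cos(p̄_z t) − 1) + (p̄_y/p̄_z) sin(p̄_z t), z(t) = ε² p̄_z t + ((p̄_x² + p̄_y²)/(2 p̄_z)) (t − sin(p̄_z t)/p̄_z), and p_x(t) = p̄_x − (p̄_z/2) y(t), p_y(t) = p̄_y + (p̄_z/2) x(t), p_z(t) = p̄_z. Then (x,y,z)(0) = (0,0,0), (p_x,p_y,p_z)(0) = p̄, and for every t ∈ ℝ the following differential equations hold: x'(t) = p_x(t) − y(t) p_z(t)/2; y'(t) = p_y(t) + x(t) p_z(t)/2; z'(t) = −(p_x(t) − y(t) p_z(t)/2) y(t)/2 + (p_y(t) + x(t) p_z(t)/2) x(t)/2 + ε² p_z(t); p_x'(t) = −(p_y(t) + x(t) p_z(t)/2) p_z(t)/2; p_y'(t) = (p_x(t) − y(t) p_z(t)/2) p_z(t)/2; p_z'(t) = 0. -/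

import Mathlib

set_option maxHeartbeats 1000000


/-- The explicit curves solve the Hamiltonian system of the left-invariant Riemannian metric
`g_ε` on the Heisenberg group, with initial conditions `(x,y,z)(0) = 0` and `p(0) = p̄`. -/
theorem heisenberg_hamiltonian_system
    (ε : ℝ) (hε : 0 ≤ ε)
    (px0 py0 pz0 : ℝ) (hpz0 : pz0 ≠ 0)
    (x y z px py pz : ℝ → ℝ)
    (hx : ∀ t, x t = (py0 / pz0) * (Real.cos (pz0 * t) - 1) + (px0 / pz0) * Real.sin (pz0 * t))
    (hy : ∀ t, y t = -(px0 / pz0) * (Real.cos (pz0 * t) - 1) + (py0 / pz0) * Real.sin (pz0 * t))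
    (hz : ∀ t, z t = ε ^ 2 * pz0 * t +
      ((px0 ^ 2 + py0 ^ 2) / (2 * pz0)) * (t - Real.sin (pz0 * t) / pz0))
    (hpx : ∀ t, px t = px0 - (pz0 / 2) * y t)
    (hpy : ∀ t, py t = py0 + (pz0 / 2) * x t)
    (hpz : ∀ t, pz t = pz0) :
    (x 0 = 0 ∧ y 0 = 0 ∧ z 0 = 0) ∧
    (px 0 = px0 ∧ py 0 = py0 ∧ pz 0 = pz0) ∧
    ∀ t : ℝ,
      HasDerivAt x (px t - y t * pz t / 2) t ∧
      HasDerivAt y (py t + x t * pz t / 2) t ∧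
      HasDerivAt z (-(px t - y t * pz t / 2) * y t / 2
        + (py t + x t * pz t / 2) * x t / 2 + ε ^ 2 * pz t) t ∧
      HasDerivAt px (-(py t + x t * pz t / 2) * pz t / 2) t ∧
      HasDerivAt py ((px t - y t * pz t / 2) * pz t / 2) t ∧
      HasDerivAt pz 0 t := by
  have hxf : x = fun t => (py0 / pz0) * (Real.cos (pz0 * t) - 1) + (px0 / pz0) * Real.sin (pz0 * t) :=
    funext hx
  have hyf : y = fun t => -(px0 / pz0) * (Real.cos (pz0 * t) - 1) + (py0 / pz0) * Real.sin (pz0 * t) :=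
    funext hy
  have hzf : z = fun t => ε ^ 2 * pz0 * t +
      ((px0 ^ 2 + py0 ^ 2) / (2 * pz0)) * (t - Real.sin (pz0 * t) / pz0) := funext hz
  have hinner : ∀ t : ℝ, HasDerivAt (fun t : ℝ => pz0 * t) pz0 t := fun t => by
    simpa using (hasDerivAt_id t).const_mul pz0
  have hcos : ∀ t : ℝ, HasDerivAt (fun t : ℝ => Real.cos (pz0 * t))
      (-Real.sin (pz0 * t) * pz0) t := fun t =>
    (Real.hasDerivAt_cos (pz0 * t)).comp t (hinner t)
  have hsin : ∀ t : ℝ, HasDerivAt (fun t : ℝ => Real.sin (pz0 * t))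
      (Real.cos (pz0 * t) * pz0) t := fun t =>
    (Real.hasDerivAt_sin (pz0 * t)).comp t (hinner t)
  have hdx : ∀ t : ℝ, HasDerivAt x
      (py0 / pz0 * (-Real.sin (pz0 * t) * pz0) + px0 / pz0 * (Real.cos (pz0 * t) * pz0)) t := by
    intro t
    rw [hxf]
    exact (((hcos t).sub_const 1).const_mul _).add ((hsin t).const_mul _)
  have hdy : ∀ t : ℝ, HasDerivAt y
      (-(px0 / pz0) * (-Real.sin (pz0 * t) * pz0) + py0 / pz0 * (Real.cos (pz0 * t) * pz0)) t := by
    intro t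
    rw [hyf]
    exact (((hcos t).sub_const 1).const_mul _).add ((hsin t).const_mul _)
  refine ⟨⟨?_, ?_, ?_⟩, ⟨?_, ?_, hpz 0⟩, ?_⟩
  · simp [hx]
  · simp [hy]
  · simp [hz]
  · simp [hpx, hy]
  · simp [hpy, hx]
  intro t
  have hS := Real.sin_sq_add_cos_sq (pz0 * t)
  refine ⟨?_, ?_, ?_, ?_, ?_, ?_⟩
  · have := hdx t
    convert this using 1
    rw [hpx t, hy t, hpz t]
    field_simp
    ring
  · have := hdy t
    convert this using 1
    rw [hpy t, hx t, hpz t]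
    field_simp
    ring
  · have hdz : HasDerivAt z (ε ^ 2 * pz0 * 1 +
        ((px0 ^ 2 + py0 ^ 2) / (2 * pz0)) * (1 - Real.cos (pz0 * t) * pz0 / pz0)) t := by
      rw [hzf]
      exact ((hasDerivAt_id t).const_mul _).add
        (((hasDerivAt_id t).sub ((hsin t).div_const pz0)).const_mul _)
    convert hdz using 1
    rw [hpx t, hpy t, hx t, hy t, hpz t]
    field_simp
    linear_combination (px0 ^ 2 + py0 ^ 2) * 2 * hS
  · have hdpx : HasDerivAt px (-(pz0 / 2) *
        (-(px0 / pz0) * (-Real.sin (pz0 * t) * pz0) + py0 / pz0 * (Real.cos (pz0 * t) * pz0))) t := by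
      have : px = fun t => px0 - (pz0 / 2) * y t := funext hpx
      rw [this]
      exact ((hasDerivAt_const t px0).sub ((hdy t).const_mul (pz0/2))).congr_deriv (by ring)
    convert hdpx using 1
    rw [hpy t, hx t, hpz t]
    field_simp
    ring
  · have hdpy : HasDerivAt py ((pz0 / 2) *
        (py0 / pz0 * (-Real.sin (pz0 * t) * pz0) + px0 / pz0 * (Real.cos (pz0 * t) * pz0))) t := by
      have : py = fun t => py0 + (pz0 / 2) * x t := funext hpy
      rw [this]
      exact ((hasDerivAt_const t py0).add ((hdx t).const_mul (pz0/2))).congr_deriv (by ring)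
    convert hdpy using 1
    rw [hpx t, hy t, hpz t]
    field_simp
    ring
  · have : pz = fun _ => pz0 := funext hpz
    rw [this]
    exact hasDerivAt_const t pz0
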